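/- arXiv:1910.06623 — 2 statements merged into one kernel-verified Lean document; each statement's English description precedes it below -/
import Mathlib

section
/- Define A(x) := φ(x) − φ(x+t) for x > 0. Then A is strictly increasing and negative on (0,∞), with A(x) → −∞ as x → 0⁺ and A(x) → 0 as x → ∞. Consequently, for every constant b > 0 the function x ↦ A(x) + b has a unique zero in (0,∞). -/
open Real Filter Topology

/-- The digamma function `ψ(x) = d/dx log Γ(x)`. -/
noncomputable def digamma (x : ℝ) : ℝ := deriv (fun y => Real.log (Real.Gamma y)) x

/-- `φ(x) := ψ(x) - log x`. -/
noncomputable def phiFn (x : ℝ) : ℝ := digamma x - Real.log x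

/-- `A(x) := φ(x) - φ(x + t)`. -/
noncomputable def Afn (t x : ℝ) : ℝ := phiFn x - phiFn (x + t)

namespace AfnAux


noncomputable def lg : ℝ → ℝ := fun y => Real.log (Real.Gamma y)

lemma lg_diff {x : ℝ} (hx : 0 < x) : DifferentiableAt ℝ lg x := by
  refine (Real.differentiableAt_Gamma fun m => ?_).log (Real.Gamma_ne_zero fun m => ?_) <;>
    · intro h
      have : (0:ℝ) ≤ m := m.cast_nonneg
      rw [h] at hx; linarith

lemma digamma_eq (x : ℝ) : digamma x = deriv lg x := rfl

lemma lg_convex : ConvexOn ℝ (Set.Ioi 0) lg := by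
  exact Real.convexOn_log_Gamma

lemma digamma_add_one {x : ℝ} (hx : 0 < x) : digamma (x + 1) = digamma x + 1 / x := by
  rw [digamma_eq, digamma_eq]
  rw [← deriv_comp_add_const, one_div, ← Real.deriv_log,
    ← deriv_add (lg_diff hx) (Real.differentiableAt_log hx.ne')]
  apply Filter.EventuallyEq.deriv_eq
  filter_upwards [eventually_gt_nhds hx] with y hy
  simp only [Pi.add_apply, lg, Real.Gamma_add_one hy.ne',
    Real.log_mul hy.ne' (Real.Gamma_pos_of_pos hy).ne', add_comm]

lemma digamma_mono {a b : ℝ} (ha : 0 < a) (hab : a ≤ b) : digamma a ≤ digamma b := by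
  rcases eq_or_lt_of_le hab with rfl | h
  · exact le_rfl
  have hb : 0 < b := ha.trans h
  rw [digamma_eq, digamma_eq]
  exact (lg_convex.deriv_le_slope ha hb h (lg_diff ha)).trans
    (lg_convex.slope_le_deriv ha hb h (lg_diff hb))

lemma digamma_bounds {x : ℝ} (hx : 0 < x) :
    Real.log x ≤ digamma (x + 1) ∧ digamma (x + 1) ≤ Real.log (x + 1) := by
  have hx1 : (0:ℝ) < x + 1 := by linarith
  have hx2 : (0:ℝ) < x + 2 := by linarith
  have hrec : ∀ y : ℝ, 0 < y → lg (y + 1) = lg y + Real.log y := fun y hy => by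
    simp only [lg, Real.Gamma_add_one hy.ne',
      Real.log_mul hy.ne' (Real.Gamma_pos_of_pos hy).ne', add_comm]
  constructor
  · have h := lg_convex.slope_le_deriv (Set.mem_Ioi.mpr hx) (Set.mem_Ioi.mpr hx1)
      (by linarith) (lg_diff hx1)
    rwa [slope_def_field, show x + 1 - x = (1:ℝ) by ring, div_one, hrec x hx,
      add_sub_cancel_left, ← digamma_eq] at h
  · have h := lg_convex.deriv_le_slope (Set.mem_Ioi.mpr hx1) (Set.mem_Ioi.mpr hx2)
      (by linarith) (lg_diff hx1)
    rwa [slope_def_field, show x + 2 - (x + 1) = (1:ℝ) by ring, div_one,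
      show x + 2 = (x + 1) + 1 by ring, hrec (x+1) hx1, add_sub_cancel_left, ← digamma_eq] at h

lemma phi_tendsto : Tendsto phiFn atTop (nhds 0) := by
  apply squeeze_zero_norm' (a := fun y => 1 / (y - 1))
  · filter_upwards [eventually_ge_atTop (2:ℝ)] with y hy
    have h1 : (0:ℝ) < y - 1 := by linarith
    have hb := digamma_bounds h1
    rw [show y - 1 + 1 = y by ring] at hb
    have hupper : phiFn y ≤ 0 := by
      have := hb.2
      simp only [phiFn]
      have : Real.log (y - 1 + 1) = Real.log y := by rw [show y - 1 + 1 = y by ring]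
      linarith [hb.2, this]
    have hlog : Real.log y - Real.log (y - 1) ≤ 1 / (y - 1) := by
      have hyy : Real.log y - Real.log (y - 1) = Real.log (y / (y - 1)) := by
        rw [Real.log_div (by linarith) h1.ne']
      rw [hyy]
      have := Real.log_le_sub_one_of_pos (show (0:ℝ) < y / (y-1) by positivity)
      have heq : y / (y - 1) - 1 = 1 / (y - 1) := by field_simp; ring
      linarith
    have hlower : -(1 / (y - 1)) ≤ phiFn y := by
      simp only [phiFn]
      linarith [hb.1]
    rw [Real.norm_eq_abs, abs_le]
    constructor
    · linarith
    · have : (0:ℝ) ≤ 1 / (y-1) := by positivity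
      linarith
  · have : Tendsto (fun y : ℝ => y - 1) atTop atTop := tendsto_atTop_add_const_right _ _ tendsto_id
    simp only [one_div]; exact this.inv_tendsto_atTop

lemma digamma_add_nat {x : ℝ} (hx : 0 < x) (N : ℕ) :
    digamma (x + N) = digamma x + ∑ n ∈ Finset.range N, 1 / (x + n) := by
  induction N with
  | zero => simp
  | succ N ih =>
    have h : x + (N + 1 : ℕ) = (x + N) + 1 := by push_cast; ring
    rw [h, digamma_add_one (by positivity), ih, Finset.sum_range_succ]
    ring



noncomputable def gFn (t x : ℝ) : ℝ := 1 / x - 1 / (x + t)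
noncomputable def GFn (t x : ℝ) : ℝ := Real.log x - Real.log (x + t)
noncomputable def hFn (t x : ℝ) : ℝ := GFn t (x + 1) - GFn t x - gFn t x

lemma gFn_pos {t x : ℝ} (ht : 0 < t) (hx : 0 < x) : 0 < gFn t x := by
  have := one_div_lt_one_div_of_lt hx (by linarith : x < x + t)
  simpa [gFn, sub_pos] using this

lemma gFn_anti {t a x : ℝ} (ht : 0 < t) (ha : 0 < a) (hax : a ≤ x) :
    gFn t x ≤ gFn t a := by
  have hx : 0 < x := lt_of_lt_of_le ha hax
  have e1 : gFn t x = t / (x * (x + t)) := by simp only [gFn]; field_simp; ring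
  have e2 : gFn t a = t / (a * (a + t)) := by simp only [gFn]; field_simp; ring
  rw [e1, e2]
  apply div_le_div_of_nonneg_left ht.le (by positivity)
  nlinarith

noncomputable def rFn (u : ℝ) : ℝ := Real.log (1 + u) - u

lemma rFn_strictAnti : StrictAntiOn rFn (Set.Ici 0) := by
  have hderiv : ∀ u : ℝ, 0 < u → HasDerivAt rFn (1 / (1 + u) - 1) u := by
    intro u hu
    have h1 : HasDerivAt (fun y : ℝ => 1 + y) 1 u := (hasDerivAt_id u).const_add 1
    have h2 := h1.log (by linarith : (1:ℝ) + u ≠ 0)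
    exact h2.sub (hasDerivAt_id u)
  apply strictAntiOn_of_deriv_neg (convex_Ici 0)
  · intro u hu
    rcases eq_or_lt_of_le (Set.mem_Ici.mp hu) with rfl | h
    · -- continuity at 0 within Ici 0
      apply ContinuousWithinAt.sub
      · apply Real.continuousAt_log (by norm_num : (1:ℝ) + 0 ≠ 0) |>.comp
          (continuous_const.add continuous_id).continuousAt |>.continuousWithinAt
      · exact continuousWithinAt_id
    · exact (hderiv u h).continuousAt.continuousWithinAt
  · intro u hu
    rw [interior_Ici] at hu
    have hu' := Set.mem_Ioi.mp hu
    rw [(hderiv u hu').deriv]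
    have : 1 / (1 + u) < 1 := by
      rw [div_lt_one (by linarith)]; linarith
    linarith

lemma hFn_eq_r {t x : ℝ} (ht : 0 < t) (hx : 0 < x) :
    hFn t x = rFn (1 / x) - rFn (1 / (x + t)) := by
  have hxt : (0:ℝ) < x + t := by linarith
  have h1 : (1:ℝ) + 1 / x = (x + 1) / x := by field_simp
  have h2 : (1:ℝ) + 1 / (x + t) = (x + t + 1) / (x + t) := by field_simp
  simp only [rFn, hFn, GFn, gFn, h1, h2, Real.log_div (by positivity : (x:ℝ)+1 ≠ 0) hx.ne',
    Real.log_div (by positivity : (x:ℝ)+t+1 ≠ 0) hxt.ne']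
  ring_nf

lemma hFn_neg {t x : ℝ} (ht : 0 < t) (hx : 0 < x) : hFn t x < 0 := by
  have hxt : (0:ℝ) < x + t := by linarith
  rw [hFn_eq_r ht hx]
  have h := rFn_strictAnti (Set.mem_Ici.mpr (by positivity : (0:ℝ) ≤ 1 / (x + t)))
    (Set.mem_Ici.mpr (by positivity : (0:ℝ) ≤ 1 / x))
    (by apply one_div_lt_one_div_of_lt hx; linarith)
  linarith

lemma GFn_step_nonneg {t x : ℝ} (ht : 0 < t) (hx : 0 < x) : GFn t x ≤ GFn t (x + 1) := by
  have hxt : (0:ℝ) < x + t := by linarith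
  simp only [GFn]
  rw [sub_le_sub_iff]
  rw [← Real.log_mul hx.ne' (by positivity : (x:ℝ)+1+t ≠ 0),
    ← Real.log_mul (by positivity : (x:ℝ)+1 ≠ 0) hxt.ne']
  apply Real.log_le_log (by positivity)
  nlinarith

lemma hFn_norm_le {t x : ℝ} (ht : 0 < t) (hx : 0 < x) : ‖hFn t x‖ ≤ gFn t x := by
  rw [Real.norm_eq_abs, abs_of_neg (hFn_neg ht hx)]
  have := GFn_step_nonneg ht hx
  simp only [hFn]
  linarith

lemma hFn_hasDeriv {t x : ℝ} (ht : 0 < t) (hx : 0 < x) :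
    HasDerivAt (hFn t) (1 / (x ^ 2 * (x + 1)) - 1 / ((x + t) ^ 2 * (x + t + 1))) x := by
  have hxt : (0:ℝ) < x + t := by linarith
  have hlog : ∀ c : ℝ, 0 < x + c → HasDerivAt (fun y : ℝ => Real.log (y + c)) (1 / (x + c)) x := by
    intro c hc
    simpa using ((hasDerivAt_id x).add_const c).log hc.ne'
  have hinv : ∀ c : ℝ, 0 < x + c → HasDerivAt (fun y : ℝ => 1 / (y + c)) (-1 / (x + c) ^ 2) x := by
    intro c hc
    have := ((hasDerivAt_id x).add_const c).inv hc.ne'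
    simp only [one_div]; exact this
  have hG1 : HasDerivAt (fun y : ℝ => GFn t (y + 1)) (1 / (x + 1) - 1 / (x + 1 + t)) x := by
    have := (hlog 1 (by linarith)).sub (hlog (1 + t) (by linarith))
    have e : (fun y : ℝ => GFn t (y + 1)) = fun y => Real.log (y + 1) - Real.log (y + (1 + t)) := by
      funext y; simp only [GFn, add_assoc]
    rw [e, add_assoc x 1 t]
    exact this
  have hG0 : HasDerivAt (fun y : ℝ => GFn t y) (1 / x - 1 / (x + t)) x := by
    have h1 : HasDerivAt Real.log (1 / x) x := by simpa [one_div] using Real.hasDerivAt_log hx.ne'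
    have := h1.sub (hlog t hxt)
    exact this
  have hg : HasDerivAt (fun y : ℝ => gFn t y) (-1 / x ^ 2 - -1 / (x + t) ^ 2) x := by
    have h1 : HasDerivAt (fun y : ℝ => 1 / y) (-1 / x ^ 2) x := by
      simp only [one_div]; exact (hasDerivAt_id x).inv hx.ne'
    have := h1.sub (hinv t hxt)
    exact this
  have := (hG1.sub hG0).sub hg
  have heq : hFn t = fun y => GFn t (y + 1) - GFn t y - gFn t y := rfl
  rw [heq]
  refine this.congr_deriv ?_
  field_simp
  ring

lemma hFn_strictMono {t : ℝ} (ht : 0 < t) : StrictMonoOn (hFn t) (Set.Ioi 0) := by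
  apply strictMonoOn_of_deriv_pos (convex_Ioi 0)
  · intro x hx
    exact (hFn_hasDeriv ht (Set.mem_Ioi.mp hx)).continuousAt.continuousWithinAt
  · intro x hx
    rw [interior_Ioi] at hx
    have hx' := Set.mem_Ioi.mp hx
    rw [(hFn_hasDeriv ht hx').deriv]
    have hlt : x ^ 2 * (x + 1) < (x + t) ^ 2 * (x + t + 1) := by
      nlinarith [mul_pos hx' ht, mul_pos (mul_pos hx' hx') ht, mul_pos (mul_pos hx' ht) ht,
        mul_pos (mul_pos ht ht) ht]
    have := one_div_lt_one_div_of_lt (by positivity) hlt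
    linarith


lemma sum_gFn_eq {t a : ℝ} (ht : 0 < t) (ha : 0 < a) (N : ℕ) :
    ∑ n ∈ Finset.range N, gFn t (a + n) =
      (digamma (a + N) - digamma a) - (digamma (a + t + N) - digamma (a + t)) := by
  have h1 := digamma_add_nat ha N
  have h2 := digamma_add_nat (show (0:ℝ) < a + t by linarith) N
  have e : ∀ n : ℕ, gFn t (a + n) = 1 / (a + n) - 1 / (a + t + n) := by
    intro n; simp only [gFn]; ring_nf
  rw [Finset.sum_congr rfl (fun n _ => e n), Finset.sum_sub_distrib]
  linarith [h1, h2]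

lemma summable_gFn {t a : ℝ} (ht : 0 < t) (ha : 0 < a) :
    Summable (fun n : ℕ => gFn t (a + n)) := by
  apply summable_of_sum_range_le (c := digamma (a + t) - digamma a)
  · intro n; exact (gFn_pos ht (by positivity)).le
  · intro N
    rw [sum_gFn_eq ht ha N]
    have := digamma_mono (show (0:ℝ) < a + N by positivity) (show a + (N:ℝ) ≤ a + t + N by linarith)
    linarith

lemma summable_hFn {t x : ℝ} (ht : 0 < t) (hx : 0 < x) :
    Summable (fun n : ℕ => ‖hFn t (x + n)‖) := by
  apply Summable.of_nonneg_of_le (fun n => norm_nonneg _)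
    (fun n => hFn_norm_le ht (by positivity)) (summable_gFn ht hx)

lemma hasSum_hFn {t x : ℝ} (ht : 0 < t) (hx : 0 < x) :
    HasSum (fun n : ℕ => hFn t (x + n)) (Afn t x) := by
  rw [hasSum_iff_tendsto_nat_of_summable_norm (summable_hFn ht hx)]
  have key : ∀ N : ℕ, ∑ n ∈ Finset.range N, hFn t (x + n)
      = Afn t x + (phiFn (x + t + N) - phiFn (x + N)) := by
    intro N
    have hsplit : ∀ n : ℕ, hFn t (x + n) =
        ((fun k : ℕ => GFn t (x + k)) (n + 1) - (fun k : ℕ => GFn t (x + k)) n) - gFn t (x + n) := by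
      intro n
      simp only [hFn]
      push_cast
      ring_nf
    rw [Finset.sum_congr rfl (fun n _ => hsplit n), Finset.sum_sub_distrib,
      Finset.sum_range_sub (fun k : ℕ => GFn t (x + k)), sum_gFn_eq ht hx N]
    simp only [Afn, phiFn, GFn, Nat.cast_zero, add_zero]
    have e1 : Real.log (x + (N:ℝ) + t) = Real.log (x + t + N) := by ring_nf
    have e2 : digamma (x + (N:ℝ) + t) = digamma (x + t + N) := by ring_nf
    rw [e1]
    ring_nf
  have hlim : Tendsto (fun N : ℕ => Afn t x + (phiFn (x + t + N) - phiFn (x + N)))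
      atTop (nhds (Afn t x + (0 - 0))) := by
    apply Tendsto.add tendsto_const_nhds
    apply Tendsto.sub
    · exact phi_tendsto.comp (tendsto_atTop_add_const_left _ _ tendsto_natCast_atTop_atTop)
    · exact phi_tendsto.comp (tendsto_atTop_add_const_left _ _ tendsto_natCast_atTop_atTop)
  simp only [sub_zero, add_zero] at hlim
  exact (tendsto_congr key).mpr hlim

lemma continuousOn_Afn {t : ℝ} (ht : 0 < t) : ContinuousOn (Afn t) (Set.Ioi 0) := by
  intro x0 hx0
  have hx0' := Set.mem_Ioi.mp hx0
  set a := x0 / 2 with ha_def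
  have ha : 0 < a := by positivity
  have hmem : Set.Ioi a ∈ nhds x0 := Ioi_mem_nhds (by simp only [ha_def]; linarith)
  have hcont : ContinuousOn (fun x => ∑' n : ℕ, hFn t (x + n)) (Set.Ioi a) := by
    apply continuousOn_tsum (u := fun n : ℕ => gFn t (a + n))
    · intro n
      intro x hx
      have hxp : (0:ℝ) < x := lt_trans ha (Set.mem_Ioi.mp hx)
      have hxpos : (0:ℝ) < x + n := by positivity
      have hin : ContinuousAt (fun y : ℝ => y + (n:ℝ)) x := by fun_prop
      have hcomp : ContinuousAt (hFn t ∘ fun y : ℝ => y + (n:ℝ)) x :=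
        ContinuousAt.comp (x := x) (f := fun y : ℝ => y + (n:ℝ)) (g := hFn t)
          (hFn_hasDeriv ht hxpos).continuousAt hin
      exact hcomp.continuousWithinAt
    · exact summable_gFn ht ha
    · intro n x hx
      have hax := (Set.mem_Ioi.mp hx).le
      have hxp : (0:ℝ) < x := lt_trans ha (Set.mem_Ioi.mp hx)
      refine (hFn_norm_le ht (by positivity : (0:ℝ) < x + n)).trans ?_
      exact gFn_anti ht (by positivity) (by linarith)
  have heq : ∀ x ∈ Set.Ioi a, Afn t x = ∑' n : ℕ, hFn t (x + n) := by
    intro x hx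
    exact (hasSum_hFn ht (lt_trans ha (Set.mem_Ioi.mp hx))).tsum_eq.symm
  have hca : ContinuousAt (fun x => ∑' n : ℕ, hFn t (x + n)) x0 :=
    hcont.continuousAt hmem
  have : ContinuousAt (Afn t) x0 := by
    apply hca.congr
    filter_upwards [hmem] with y hy
    exact (heq y hy).symm
  exact this.continuousWithinAt


end AfnAux

open AfnAux in
/-- for `t = d/2` with `d ≥ 1` an integer, the function `A(x) = φ(x) − φ(x+t)`
is strictly increasing and negative on `(0,∞)`, tends to `-∞` as `x → 0⁺` and to `0` as
`x → ∞`; consequently for every `b > 0` the function `x ↦ A(x) + b` has a unique zero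
in `(0,∞)`. -/
theorem A_strictMono_neg_limits_unique_zero (d : ℕ) (hd : 1 ≤ d) (t : ℝ) (ht : t = d / 2) :
    StrictMonoOn (Afn t) (Set.Ioi (0 : ℝ)) ∧
    (∀ x > (0 : ℝ), Afn t x < 0) ∧
    Tendsto (Afn t) (nhdsWithin 0 (Set.Ioi 0)) atBot ∧
    Tendsto (Afn t) atTop (nhds 0) ∧
    (∀ b > (0 : ℝ), ∃! x : ℝ, x > 0 ∧ Afn t x + b = 0) := by
  have htpos : 0 < t := by
    rw [ht]
    have : (0:ℝ) < d := by exact_mod_cast Nat.pos_of_ne_zero (by omega)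
    linarith
  -- 1. strict monotonicity
  have hmono : StrictMonoOn (Afn t) (Set.Ioi (0 : ℝ)) := by
    intro x hx y hy hxy
    have hx' := Set.mem_Ioi.mp hx
    have hy' := Set.mem_Ioi.mp hy
    refine hasSum_lt (f := fun n : ℕ => hFn t (x + n)) (g := fun n : ℕ => hFn t (y + n))
      (i := 0) ?_ ?_ (hasSum_hFn htpos hx') (hasSum_hFn htpos hy')
    · intro n
      exact ((hFn_strictMono htpos) (Set.mem_Ioi.mpr (by positivity))
        (Set.mem_Ioi.mpr (by positivity)) (by linarith)).le
    · have := (hFn_strictMono htpos) (Set.mem_Ioi.mpr hx') (Set.mem_Ioi.mpr hy') hxy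
      simpa using this
  -- 2. negativity
  have hneg : ∀ x > (0 : ℝ), Afn t x < 0 := by
    intro x hx
    refine hasSum_lt (f := fun n : ℕ => hFn t (x + n)) (g := fun _ : ℕ => (0:ℝ)) (i := 0)
      ?_ ?_ (hasSum_hFn htpos hx) hasSum_zero
    · intro n; exact (hFn_neg htpos (by positivity)).le
    · exact hFn_neg htpos (by positivity)
  -- 4. limit at infinity
  have htop : Tendsto (Afn t) atTop (nhds 0) := by
    have h1 : Tendsto (fun x : ℝ => phiFn (x + t)) atTop (nhds 0) :=
      phi_tendsto.comp (tendsto_atTop_add_const_right _ _ tendsto_id)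
    have := phi_tendsto.sub h1
    rw [sub_zero] at this
    exact this
  -- 3. limit at 0+
  have hbot : Tendsto (Afn t) (nhdsWithin 0 (Set.Ioi 0)) atBot := by
    set C := digamma 2 - digamma t + Real.log (1 + t) with hC
    have hbound : ∀ x ∈ Set.Ioo (0:ℝ) (1/16), Afn t x ≤ C - 1 / (2 * x) := by
      intro x hx
      obtain ⟨hx0, hx16⟩ := hx
      have hxt : (0:ℝ) < x + t := by linarith
      have h1 : digamma x = digamma (x + 1) - 1 / x := by
        rw [digamma_add_one hx0]; ring
      have h2 : digamma (x + 1) ≤ digamma 2 := digamma_mono (by linarith) (by linarith)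
      have h3 : digamma t ≤ digamma (x + t) := digamma_mono htpos (by linarith)
      have h4 : Real.log (x + t) ≤ Real.log (1 + t) := Real.log_le_log hxt (by linarith)
      have h5 : -Real.log x ≤ 1 / (2 * x) := by
        have hu : (16:ℝ) ≤ x⁻¹ := by
          rw [le_inv_comm₀ (by norm_num) hx0]
          linarith
        have hs : (4:ℝ) ≤ Real.sqrt x⁻¹ := by
          rw [show (4:ℝ) = Real.sqrt 16 by
            rw [show (16:ℝ) = 4^2 by norm_num, Real.sqrt_sq (by norm_num)]]
          exact Real.sqrt_le_sqrt hu
        have hlogu : Real.log x⁻¹ = 2 * Real.log (Real.sqrt x⁻¹) := by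
          rw [Real.log_sqrt (by positivity)]; ring
        have hls : Real.log (Real.sqrt x⁻¹) ≤ Real.sqrt x⁻¹ - 1 :=
          Real.log_le_sub_one_of_pos (by positivity)
        have hsq : Real.sqrt x⁻¹ * Real.sqrt x⁻¹ = x⁻¹ :=
          Real.mul_self_sqrt (by positivity)
        have : Real.log x⁻¹ ≤ x⁻¹ / 2 := by
          nlinarith [hs, hsq, hls, hlogu]
        rw [Real.log_inv] at this
        have : -Real.log x ≤ x⁻¹ / 2 := by linarith
        calc -Real.log x ≤ x⁻¹ / 2 := this
          _ = 1 / (2 * x) := by field_simp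
      simp only [Afn, phiFn]
      have hhalf : 1 / x - 1 / (2 * x) = 1 / (2 * x) := by
        rw [div_sub_div _ _ hx0.ne' (by positivity : (2*x:ℝ) ≠ 0)]
        rw [div_eq_div_iff (by positivity) (by positivity)]
        ring
      have : 1 / (2*x) ≤ 1 / x := by
        rw [div_le_div_iff₀ (by positivity) hx0]; linarith
      linarith [h1, h2, h3, h4, h5]
    have hBlim : Tendsto (fun x : ℝ => C - 1 / (2 * x)) (nhdsWithin 0 (Set.Ioi 0)) atBot := by
      have h1 : Tendsto (fun x : ℝ => (2 * x)⁻¹) (nhdsWithin 0 (Set.Ioi 0)) atTop := by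
        have h2 : Tendsto (fun x : ℝ => 2 * x) (nhdsWithin 0 (Set.Ioi 0))
            (nhdsWithin 0 (Set.Ioi 0)) := by
          apply tendsto_nhdsWithin_of_tendsto_nhds_of_eventually_within
          · have h3 : Tendsto (fun x : ℝ => 2 * x) (nhds (0:ℝ)) (nhds (2*0)) :=
              (continuous_const.mul continuous_id).tendsto 0
            simpa using h3.mono_left nhdsWithin_le_nhds
          · filter_upwards [self_mem_nhdsWithin] with y hy
            exact Set.mem_Ioi.mpr (by have := Set.mem_Ioi.mp hy; linarith)
        exact tendsto_inv_nhdsGT_zero.comp h2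
      have := tendsto_atBot_add_const_left _ C (tendsto_neg_atTop_atBot.comp h1)
      exact this.congr (fun x => by simp [Function.comp_apply, one_div, sub_eq_add_neg])
    apply tendsto_atBot_mono' _ ?_ hBlim
    filter_upwards [Ioo_mem_nhdsGT_of_mem (by norm_num : (0:ℝ) ∈ Set.Ico (0:ℝ) (1/16))]
      with x hx
    exact hbound x hx
  refine ⟨hmono, hneg, hbot, htop, ?_⟩
  -- 5. unique zero
  intro b hb
  have hx2 : ∃ x2 : ℝ, 0 < x2 ∧ -b < Afn t x2 := by
    have h := htop.eventually (eventually_gt_nhds (by linarith : -b < 0))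
    obtain ⟨x2, hx2a, hx2b⟩ := (h.and (eventually_gt_atTop 0)).exists
    exact ⟨x2, hx2b, hx2a⟩
  obtain ⟨x2, hx2pos, hx2gt⟩ := hx2
  have hx1 : ∃ x1 : ℝ, x1 ∈ Set.Ioo 0 x2 ∧ Afn t x1 < -b := by
    have h1 := hbot.eventually (eventually_lt_atBot (-b))
    have h2 : Set.Ioo (0:ℝ) x2 ∈ nhdsWithin 0 (Set.Ioi 0) :=
      Ioo_mem_nhdsGT_of_mem ⟨le_refl 0, hx2pos⟩
    obtain ⟨x1, hx1a, hx1b⟩ := (h1.and (Filter.eventually_of_mem h2 (fun x hx => hx))).exists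
    exact ⟨x1, hx1b, hx1a⟩
  obtain ⟨x1, hx1mem, hx1lt⟩ := hx1
  obtain ⟨hx1pos, hx1x2⟩ := hx1mem
  have hsub : Set.Icc x1 x2 ⊆ Set.Ioi (0:ℝ) := fun y hy => lt_of_lt_of_le hx1pos hy.1
  have hcont : ContinuousOn (fun x => Afn t x + b) (Set.Icc x1 x2) :=
    ((continuousOn_Afn htpos).mono hsub).add continuousOn_const
  have hivt := intermediate_value_Icc hx1x2.le hcont
  have h0mem : (0:ℝ) ∈ Set.Icc (Afn t x1 + b) (Afn t x2 + b) := by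
    constructor <;> [linarith; linarith]
  obtain ⟨c, hcmem, hceq⟩ := hivt h0mem
  refine ⟨c, ⟨lt_of_lt_of_le hx1pos hcmem.1, hceq⟩, ?_⟩
  rintro y ⟨hy0, hyeq⟩
  have hcpos : 0 < c := lt_of_lt_of_le hx1pos hcmem.1
  have hceq' : Afn t c + b = 0 := hceq
  have : Afn t y = Afn t c := by linarith
  exact hmono.injOn (Set.mem_Ioi.mpr hy0) (Set.mem_Ioi.mpr hcpos) this
end

section
/- Let s > 0 with s ≠ t and define B_s(x) := (x+t)/(x+s) − log((x+t)/(x+s)) − 1 for x > 0. Then B_s is completely monotone: for all m ∈ ℕ₀ and all x > 0 it holds (−1)^m B_s^{(m)}(x) > 0; in particular B_s > 0, B_s' < 0 and B_s'' > 0 on (0,∞). Moreover B_s(0) = t/s − log(t/s) − 1 > 0 and B_s(x) → 0 as x → ∞; consequently F_s(x) → −∞ as x → 0⁺ and F_s(x) → 0 as x → ∞. -/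
open Real Filter Topology

/-- `B_s(x) := (x+t)/(x+s) − log((x+t)/(x+s)) − 1`. -/
noncomputable def Bs (t s x : ℝ) : ℝ :=
  (x + t) / (x + s) - Real.log ((x + t) / (x + s)) - 1

/-- `F_s(x) := φ(x) − φ(x+t) + (x+t)/(x+s) − log((x+t)/(x+s)) − 1`. -/
noncomputable def Fs (t s x : ℝ) : ℝ :=
  phiFn x - phiFn (x + t) + (x + t) / (x + s) - Real.log ((x + t) / (x + s)) - 1

lemma bern_strict {a : ℝ} (ha : -1 < a) (h0 : a ≠ 0) : ∀ n : ℕ, 2 ≤ n → 1 + (n:ℝ) * a < (1+a)^n := by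
  intro n hn
  induction n, hn using Nat.le_induction with
  | base => have := mul_self_pos.mpr h0; push_cast; nlinarith
  | succ n hn ih =>
      have h1 : (0:ℝ) < 1 + a := by linarith
      have h2 : (1 + (n:ℝ)*a) * (1+a) < (1+a)^n * (1+a) := mul_lt_mul_of_pos_right ih h1
      have h3 : (0:ℝ) < (n:ℝ) * (a*a) := by
        have : (0:ℝ) < (n:ℝ) := by positivity
        exact mul_pos this (mul_self_pos.mpr h0)
      push_cast
      calc 1 + ((n:ℝ)+1)*a ≤ (1 + (n:ℝ)*a)*(1+a) := by nlinarith
        _ < (1+a)^n * (1+a) := h2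
        _ = (1+a)^(n+1) := (pow_succ _ _).symm

lemma key_ineq (n : ℕ) (hn : 1 ≤ n) {u v : ℝ} (hu : 0 < u) (hv : 0 < v) (huv : u ≠ v) :
    0 < (n:ℝ)*(v-u)/u^(n+1) + 1/v^n - 1/u^n := by
  have hy : u/v ≠ 1 := by
    intro h; exact huv (by field_simp at h; linarith)
  have hy0 : 0 < u/v := div_pos hu hv
  have hb := bern_strict (a := u/v - 1) (by linarith) (by intro h; exact hy (by linarith)) (n+1) (by omega)
  have hb' : 0 < (u/v)^(n+1) - 1 - ((n:ℝ)+1)*(u/v - 1) := by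
    have h1 : (1:ℝ) + (u/v - 1) = u/v := by ring
    rw [h1] at hb
    push_cast at hb
    linarith
  have heq : (n:ℝ)*(v-u)/u^(n+1) + 1/v^n - 1/u^n
      = ((u/v)^(n+1) - 1 - ((n:ℝ)+1)*(u/v - 1)) * v / u^(n+1) := by
    rw [div_pow]
    field_simp
    ring
  rw [heq]
  positivity


noncomputable def G (t s : ℝ) (k : ℕ) (x : ℝ) : ℝ :=
  (-1)^(k+1) * (Nat.factorial (k+1) : ℝ) * (t-s) * (1/((x+s)^(k+2)))
    + (-1)^k * (Nat.factorial k : ℝ) * (1/((x+s)^(k+1)) - 1/((x+t)^(k+1)))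

lemma hasDerivAt_invpow (n : ℕ) (a x : ℝ) (h : x + a ≠ 0) :
    HasDerivAt (fun y => 1/((y+a)^(n+1))) (-((n:ℝ)+1) / (x+a)^(n+2)) x := by
  have h1 : HasDerivAt (fun y : ℝ => y + a) 1 x := (hasDerivAt_id x).add_const a
  have h2 := hasDerivAt_zpow (-((n:ℕ)+1) : ℤ) (x+a) (Or.inl h)
  have h3 := h2.comp x h1
  simp only [Function.comp_def] at h3
  have hfe : (fun y : ℝ => (y+a) ^ (-((n:ℕ)+1) : ℤ)) = fun y => 1/((y+a)^(n+1)) := by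
    funext y
    rw [zpow_neg, one_div]
    norm_cast
  rw [hfe] at h3
  refine h3.congr_deriv ?_; symm
  have : (-((n:ℕ)+1) - 1 : ℤ) = -((n:ℕ)+2) := by ring
  rw [this, zpow_neg]
  push_cast
  rw [div_eq_mul_inv]
  norm_cast
  ring

lemma hasDerivAt_G (t s : ℝ) (k : ℕ) {x : ℝ} (h1 : x + s ≠ 0) (h2 : x + t ≠ 0) :
    HasDerivAt (G t s k) (G t s (k+1) x) x := by
  have d1 := (hasDerivAt_invpow (k+1) s x h1).const_mul ((-1:ℝ)^(k+1) * (Nat.factorial (k+1) : ℝ) * (t-s))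
  have d2 := ((hasDerivAt_invpow k s x h1).sub (hasDerivAt_invpow k t x h2)).const_mul
    ((-1:ℝ)^k * (Nat.factorial k : ℝ))
  have := d1.add d2
  refine this.congr_deriv ?_; symm
  simp only [G, Nat.factorial_succ]
  push_cast
  ring

lemma Bs_eq {t s x : ℝ} (ht : 0 < t) (hs : 0 < s) (hx : 0 < x) :
    Bs t s x = (t - s) * (1/(x+s)) + Real.log (x+s) - Real.log (x+t) := by
  have h1 : x + s ≠ 0 := by positivity
  have h2 : x + t ≠ 0 := by positivity
  unfold Bs
  rw [Real.log_div h2 h1]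
  field_simp
  ring

lemma hasDerivAt_Bs {t s x : ℝ} (ht : 0 < t) (hs : 0 < s) (hx : 0 < x) :
    HasDerivAt (Bs t s) (G t s 0 x) x := by
  have h1 : x + s ≠ 0 := by positivity
  have h2 : x + t ≠ 0 := by positivity
  have d1 := (hasDerivAt_invpow 0 s x h1).const_mul (t - s)
  have d2 := (Real.hasDerivAt_log h1).comp x ((hasDerivAt_id x).add_const s)
  have d3 := (Real.hasDerivAt_log h2).comp x ((hasDerivAt_id x).add_const t)
  simp only [Function.comp_def] at d2 d3
  have dg := (d1.add d2).sub d3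
  have hev : (fun y => (t - s) * (1/((y+s)^(0+1))) + Real.log (y+s) - Real.log (y+t))
      =ᶠ[nhds x] Bs t s := by
    filter_upwards [eventually_gt_nhds hx] with y hy
    rw [Bs_eq ht hs hy]; norm_num
  have dB := dg.congr_of_eventuallyEq hev.symm
  refine dB.congr_deriv ?_; symm
  simp only [G]
  push_cast
  field_simp
  ring

lemma iteratedDeriv_Bs {t s : ℝ} (ht : 0 < t) (hs : 0 < s) (k : ℕ) :
    ∀ x : ℝ, 0 < x → iteratedDeriv (k+1) (Bs t s) x = G t s k x := by
  induction k with
  | zero =>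
      intro x hx
      rw [iteratedDeriv_one]
      exact (hasDerivAt_Bs ht hs hx).deriv
  | succ k ih =>
      intro x hx
      rw [iteratedDeriv_succ]
      have hev : iteratedDeriv (k+1) (Bs t s) =ᶠ[nhds x] G t s k := by
        filter_upwards [eventually_gt_nhds hx] with y hy using ih y hy
      rw [hev.deriv_eq]
      have h1 : x + s ≠ 0 := by positivity
      have h2 : x + t ≠ 0 := by positivity
      exact (hasDerivAt_G t s k h1 h2).deriv

lemma G_pos {t s : ℝ} (ht : 0 < t) (hs : 0 < s) (hst : s ≠ t) (k : ℕ) {x : ℝ} (hx : 0 < x) :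
    0 < (-1:ℝ)^(k+1) * G t s k x := by
  have hu : (0:ℝ) < x + s := by positivity
  have hv : (0:ℝ) < x + t := by positivity
  have huv : x + s ≠ x + t := fun h => hst (by linarith)
  have hE := key_ineq (k+1) (by omega) hu hv huv
  have hfac : (0:ℝ) < (Nat.factorial k : ℝ) := by positivity
  have heq : (-1:ℝ)^(k+1) * G t s k x
      = (Nat.factorial k : ℝ) * (((k:ℝ)+1)*((x+t)-(x+s))/(x+s)^(k+2) + 1/(x+t)^(k+1) - 1/(x+s)^(k+1)) := by
    rcases Nat.even_or_odd k with hk | hk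
    · have e1 : ((-1:ℝ))^k = 1 := hk.neg_one_pow
      have e2 : ((-1:ℝ))^(k+1) = -1 := (hk.add_one).neg_one_pow
      simp only [G, e1, e2, Nat.factorial_succ]
      push_cast
      ring
    · have e1 : ((-1:ℝ))^k = -1 := hk.neg_one_pow
      have e2 : ((-1:ℝ))^(k+1) = 1 := (hk.add_one).neg_one_pow
      simp only [G, e1, e2, Nat.factorial_succ]
      push_cast
      ring
  rw [heq]
  apply mul_pos hfac
  push_cast at hE
  convert hE using 2


lemma diff_logGamma {x : ℝ} (hx : 0 < x) :
    DifferentiableAt ℝ (fun y => Real.log (Real.Gamma y)) x := by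
  refine (Real.differentiableAt_Gamma fun m => ?_).log (Real.Gamma_pos_of_pos hx).ne'
  have h : (0:ℝ) ≤ (m:ℝ) := m.cast_nonneg
  intro hcon
  rw [hcon] at hx
  linarith

lemma logGamma_rec {x : ℝ} (hx : 0 < x) :
    Real.log (Real.Gamma (x+1)) = Real.log (Real.Gamma x) + Real.log x := by
  rw [Real.Gamma_add_one hx.ne', Real.log_mul hx.ne' (Real.Gamma_pos_of_pos hx).ne', add_comm]

lemma digamma_rec {x : ℝ} (hx : 0 < x) : digamma (x+1) = digamma x + 1/x := by
  unfold digamma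
  rw [← deriv_comp_add_const, one_div, ← Real.deriv_log,
    ← deriv_add (diff_logGamma hx) (Real.differentiableAt_log hx.ne')]
  apply Filter.EventuallyEq.deriv_eq
  filter_upwards [eventually_gt_nhds hx] with y hy using logGamma_rec hy

lemma digamma_le_log {x : ℝ} (hx : 0 < x) : digamma x ≤ Real.log x := by
  have hc := Real.convexOn_log_Gamma
  have h := hc.deriv_le_slope (Set.mem_Ioi.mpr hx) (Set.mem_Ioi.mpr (by linarith : (0:ℝ) < x+1))
    (by linarith) ((diff_logGamma hx).congr_of_eventuallyEq (by
      filter_upwards with y; simp [Function.comp_def]))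
  have hs : slope (Real.log ∘ Real.Gamma) x (x+1) = Real.log x := by
    rw [slope_def_field]
    simp only [Function.comp_apply]
    rw [logGamma_rec hx]
    field_simp
    ring
  rw [hs] at h
  have : deriv (Real.log ∘ Real.Gamma) x = digamma x := by
    apply Filter.EventuallyEq.deriv_eq
    filter_upwards with y; simp [Function.comp_def]
  rwa [this] at h

lemma log_le_digamma {x : ℝ} (hx : 0 < x) : Real.log x ≤ digamma (x+1) := by
  have hc := Real.convexOn_log_Gamma
  have h := hc.slope_le_deriv (Set.mem_Ioi.mpr hx) (Set.mem_Ioi.mpr (by linarith : (0:ℝ) < x+1))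
    (by linarith) ((diff_logGamma (by linarith : (0:ℝ) < x+1)).congr_of_eventuallyEq (by
      filter_upwards with y; simp [Function.comp_def]))
  have hs : slope (Real.log ∘ Real.Gamma) x (x+1) = Real.log x := by
    rw [slope_def_field]
    simp only [Function.comp_apply]
    rw [logGamma_rec hx]
    field_simp
    ring
  rw [hs] at h
  have : deriv (Real.log ∘ Real.Gamma) (x+1) = digamma (x+1) := by
    apply Filter.EventuallyEq.deriv_eq
    filter_upwards with y; simp [Function.comp_def]
  rwa [this] at h

lemma phiFn_bounds {x : ℝ} (hx : 0 < x) : -(1/x) ≤ phiFn x ∧ phiFn x ≤ 0 := by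
  have h1 := digamma_le_log hx
  have h2 := log_le_digamma hx
  have h3 := digamma_rec hx
  constructor
  · unfold phiFn; rw [h3] at h2; linarith
  · unfold phiFn; linarith

lemma Bs_pos {t s : ℝ} (ht : 0 < t) (hs : 0 < s) (hst : s ≠ t) {x : ℝ} (hx : 0 ≤ x) :
    0 < Bs t s x := by
  have hu : (0:ℝ) < x + s := by linarith
  have hv : (0:ℝ) < x + t := by linarith
  have hy0 : 0 < (x+t)/(x+s) := div_pos hv hu
  have hy1 : (x+t)/(x+s) ≠ 1 := by
    intro h
    rw [div_eq_one_iff_eq hu.ne'] at h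
    exact hst (by linarith)
  have := Real.log_lt_sub_one_of_pos hy0 hy1
  unfold Bs
  linarith

lemma Bs_tendsto_zero {t s : ℝ} (ht : 0 < t) (hs : 0 < s) :
    Tendsto (Bs t s) atTop (nhds 0) := by
  have hq : Tendsto (fun x : ℝ => (x+t)/(x+s)) atTop (nhds 1) := by
    have h0 : Tendsto (fun x : ℝ => 1 + (t-s) * (x+s)⁻¹) atTop (nhds (1 + (t-s) * 0)) := by
      exact tendsto_const_nhds.add
        ((tendsto_inv_atTop_zero.comp (tendsto_atTop_add_const_right _ s tendsto_id)).const_mul _)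
    rw [show (1:ℝ) + (t-s)*0 = 1 by ring] at h0
    apply h0.congr'
    filter_upwards [eventually_gt_atTop (0:ℝ)] with x hx
    have : x + s ≠ 0 := by positivity
    field_simp
    ring
  have hlog : Tendsto (fun x : ℝ => Real.log ((x+t)/(x+s))) atTop (nhds 0) := by
    have := (Real.continuousAt_log one_ne_zero).tendsto.comp hq
    simpa [Function.comp_def] using this
  have : Tendsto (fun x : ℝ => (x+t)/(x+s) - Real.log ((x+t)/(x+s)) - 1) atTop
      (nhds (1 - 0 - 1)) := (hq.sub hlog).sub_const 1
  rw [show (1:ℝ) - 0 - 1 = 0 by ring] at this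
  exact this

lemma phiFn_tendsto_zero : Tendsto phiFn atTop (nhds 0) := by
  have hg : Tendsto (fun x : ℝ => -(1/x)) atTop (nhds 0) := by
    simpa [one_div] using (tendsto_inv_atTop_zero : Tendsto (fun x:ℝ => x⁻¹) atTop (nhds 0)).neg
  refine tendsto_of_tendsto_of_tendsto_of_le_of_le' hg tendsto_const_nhds ?_ ?_
  · filter_upwards [eventually_gt_atTop (0:ℝ)] with x hx using (phiFn_bounds hx).1
  · filter_upwards [eventually_gt_atTop (0:ℝ)] with x hx using (phiFn_bounds hx).2

lemma Fs_eq (t s x : ℝ) : Fs t s x = (phiFn x - phiFn (x+t)) + Bs t s x := by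
  unfold Fs Bs; ring

lemma Fs_tendsto_zero {t s : ℝ} (ht : 0 < t) (hs : 0 < s) :
    Tendsto (Fs t s) atTop (nhds 0) := by
  have hphit : Tendsto (fun x : ℝ => phiFn (x+t)) atTop (nhds 0) :=
    phiFn_tendsto_zero.comp (tendsto_atTop_add_const_right _ t tendsto_id)
  have h := (phiFn_tendsto_zero.sub hphit).add (Bs_tendsto_zero ht hs)
  rw [show (0:ℝ) - 0 + 0 = 0 by ring] at h
  exact h.congr fun x => (Fs_eq t s x).symm

lemma Fs_tendsto_atBot {t s : ℝ} (ht : 0 < t) (hs : 0 < s) :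
    Tendsto (Fs t s) (nhdsWithin 0 (Set.Ioi 0)) atBot := by
  set C : ℝ := 1/t + (1+t)/s + Real.log ((1+s)/t) - 1 with hC
  -- comparator
  have hcmp : Tendsto (fun x : ℝ => (Real.log (x+1) + C) + (1/x) * (-1 - x * Real.log x))
      (nhdsWithin 0 (Set.Ioi 0)) atBot := by
    have hx1 : Tendsto (fun x : ℝ => x + 1) (nhdsWithin 0 (Set.Ioi 0)) (nhds 1) := by
      have : Tendsto (fun x : ℝ => x + 1) (nhds 0) (nhds (0+1)) :=
        (continuous_id.add continuous_const).tendsto 0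
      rw [zero_add] at this
      exact this.mono_left nhdsWithin_le_nhds
    have hlog1 : Tendsto (fun x : ℝ => Real.log (x+1) + C) (nhdsWithin 0 (Set.Ioi 0))
        (nhds (0 + C)) := by
      have := ((Real.continuousAt_log one_ne_zero).tendsto.comp hx1).add
        (tendsto_const_nhds : Tendsto (fun _ : ℝ => C) (nhdsWithin 0 (Set.Ioi 0)) (nhds C))
      simpa [Function.comp_def] using this
    have hml : Tendsto (fun x : ℝ => x * Real.log x) (nhdsWithin 0 (Set.Ioi 0)) (nhds 0) := by
      have := (Real.continuous_mul_log.tendsto 0).mono_left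
        (nhdsWithin_le_nhds (s := Set.Ioi (0:ℝ)))
      simpa using this
    have hneg : Tendsto (fun x : ℝ => -1 - x * Real.log x) (nhdsWithin 0 (Set.Ioi 0))
        (nhds (-1 : ℝ)) := by
      have := (tendsto_const_nhds : Tendsto (fun _ : ℝ => (-1:ℝ)) (nhdsWithin 0 (Set.Ioi 0)) (nhds (-1))).sub hml
      simpa using this
    have h1x : Tendsto (fun x : ℝ => 1/x) (nhdsWithin 0 (Set.Ioi 0)) atTop := by
      simpa [one_div] using (tendsto_inv_nhdsGT_zero : Tendsto (fun x:ℝ => x⁻¹) (nhdsWithin 0 (Set.Ioi 0)) atTop)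
    exact hlog1.add_atBot (h1x.atTop_mul_neg (by norm_num) hneg)
  apply tendsto_atBot_mono' _ _ hcmp
  filter_upwards [self_mem_nhdsWithin,
    (eventually_lt_nhds (by norm_num : (0:ℝ) < 1)).filter_mono nhdsWithin_le_nhds] with x hx0 hx1
  have hx : (0:ℝ) < x := hx0
  -- bound each piece of Fs
  have hphix : phiFn x ≤ Real.log (x+1) - 1/x - Real.log x := by
    have h1 := digamma_le_log (by linarith : (0:ℝ) < x+1)
    have h2 := digamma_rec hx
    unfold phiFn
    rw [show digamma x = digamma (x+1) - 1/x by rw [h2]; ring]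
    linarith
  have hphit : -phiFn (x+t) ≤ 1/t := by
    have h1 := (phiFn_bounds (by linarith : (0:ℝ) < x+t)).1
    have h2 : 1/(x+t) ≤ 1/t := by
      apply one_div_le_one_div_of_le ht
      linarith
    linarith
  have hBsb : Bs t s x ≤ (1+t)/s + Real.log ((1+s)/t) - 1 := by
    have hu : (0:ℝ) < x + s := by linarith
    have hv : (0:ℝ) < x + t := by linarith
    have hr : (x+t)/(x+s) ≤ (1+t)/s := by
      apply div_le_div₀ (by linarith) (by linarith) hs (by linarith)
    have hl : -Real.log ((x+t)/(x+s)) ≤ Real.log ((1+s)/t) := by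
      rw [← Real.log_inv, inv_div]
      apply Real.log_le_log (div_pos hu hv)
      apply div_le_div₀ (by linarith) (by linarith) ht (by linarith)
    unfold Bs
    linarith
  have : Fs t s x ≤ Real.log (x+1) - 1/x - Real.log x + C := by
    rw [Fs_eq]
    rw [hC]
    linarith
  calc Fs t s x ≤ Real.log (x+1) - 1/x - Real.log x + C := this
    _ = (Real.log (x+1) + C) + (1/x) * (-1 - x * Real.log x) := by
        field_simp
        ring

/-- with `t = d/2`, `d ≥ 1` an integer, and `s > 0`, `s ≠ t`, the function
`B_s` is completely monotone on `(0,∞)`: `(−1)^m B_s^{(m)}(x) > 0` for all `m ∈ ℕ₀`, `x > 0`;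
in particular `B_s > 0`, `B_s' < 0`, `B_s'' > 0` on `(0,∞)`. Moreover
`B_s(0) = t/s − log(t/s) − 1 > 0` and `B_s(x) → 0` as `x → ∞`; consequently
`F_s(x) → −∞` as `x → 0⁺` and `F_s(x) → 0` as `x → ∞`. -/
theorem Bs_completely_monotone (d : ℕ) (hd : 1 ≤ d) (t : ℝ) (ht : t = d / 2)
    (s : ℝ) (hs : 0 < s) (hst : s ≠ t) :
    (∀ m : ℕ, ∀ x > (0 : ℝ), 0 < (-1 : ℝ) ^ m * iteratedDeriv m (Bs t s) x) ∧
    (∀ x > (0 : ℝ), 0 < Bs t s x ∧ deriv (Bs t s) x < 0 ∧ 0 < deriv (deriv (Bs t s)) x) ∧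
    (Bs t s 0 = t / s - Real.log (t / s) - 1 ∧ 0 < Bs t s 0) ∧
    Tendsto (Bs t s) atTop (nhds 0) ∧
    Tendsto (Fs t s) (nhdsWithin 0 (Set.Ioi 0)) atBot ∧
    Tendsto (Fs t s) atTop (nhds 0) := by
  have ht0 : 0 < t := by
    have : (1:ℝ) ≤ (d:ℝ) := by exact_mod_cast hd
    rw [ht]; linarith
  have hmain : ∀ m : ℕ, ∀ x > (0 : ℝ), 0 < (-1 : ℝ) ^ m * iteratedDeriv m (Bs t s) x := by
    intro m x hx
    match m with
    | 0 =>
      rw [iteratedDeriv_zero, pow_zero, one_mul]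
      exact Bs_pos ht0 hs hst hx.le
    | (k+1) =>
      rw [iteratedDeriv_Bs ht0 hs k x hx]
      exact G_pos ht0 hs hst k hx
  refine ⟨hmain, ?_, ?_, Bs_tendsto_zero ht0 hs, Fs_tendsto_atBot ht0 hs, Fs_tendsto_zero ht0 hs⟩
  · intro x hx
    refine ⟨Bs_pos ht0 hs hst hx.le, ?_, ?_⟩
    · have h1 := hmain 1 x hx
      rw [iteratedDeriv_one] at h1
      simpa using (by nlinarith [h1] : deriv (Bs t s) x < 0)
    · have h2 := hmain 2 x hx
      rw [iteratedDeriv_succ, iteratedDeriv_one] at h2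
      nlinarith [h2]
  · have h0 : Bs t s 0 = t / s - Real.log (t / s) - 1 := by
      unfold Bs; rw [zero_add, zero_add]
    refine ⟨h0, ?_⟩
    exact Bs_pos ht0 hs hst le_rfl
end
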